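/- If the BoT leaf of a labeled binary tree of size n has label 2, then it is the sibling of the leaf labeled 1, and there are exactly 2 ways (grafting to the left or to the right of the leaf labeled 1) to reconstruct a preimage of the erasure with BoT label 2. -/

import Mathlib

/-- A plane binary tree whose non-root leaves carry natural-number labels.
The root leaf (always labeled 0) is left implicit: an `LTree` is the part of
the tree above the unique edge incident to the root. -/
inductive LTree where
  | leaf : ℕ → LTree
  | node : LTree → LTree → LTree
deriving DecidableEq

namespace LTree

/-- The size: number of branching (degree-3) nodes. -/
def size : LTree → ℕ
  | leaf _ => 0
  | node l r => size l + size r + 1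

/-- The list of labels of the (non-root) leaves, left to right. -/
def labs : LTree → List ℕ
  | leaf a => [a]
  | node l r => labs l ++ labs r

/-- `t` is a labeled binary tree of size `n`: it has `n` branching nodes and its
`n+1` non-root leaves are bijectively labeled by `{1,…,n+1}` (the root leaf gets 0). -/
def IsLab (n : ℕ) (t : LTree) : Prop :=
  size t = n ∧ List.Perm (labs t) ((List.range (n + 1)).map (· + 1))

/-- Number of elements of `L` strictly smaller than `x`. -/
def rank (L : List ℕ) (x : ℕ) : ℕ := L.countP (fun y => decide (y < x))

/-- Best-of-three comparison at a branching node with children `l`, `r`: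
`true` iff at least two of the three minimally-labeled leaves of the fringe set
lie in the left child `l`. -/
def goLeft (l r : LTree) : Bool :=
  decide (2 ≤ (labs l).countP (fun x => decide (rank (labs l ++ labs r) x < 3)))

/-- The branching node selected by the best-of-three procedure (returned as the
fringe subtree rooted at it). -/
def botSel : LTree → LTree
  | leaf a => leaf a
  | node (leaf a) (leaf b) => node (leaf a) (leaf b)
  | node l r => if goLeft l r then botSel l else botSel r

/-- The number of moves performed by the best-of-three selection. -/
def botDepth : LTree → ℕ
  | leaf _ => 0
  | node (leaf _) (leaf _) => 0
  | node l r => (if goLeft l r then botDepth l else botDepth r) + 1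

/-- The position (sequence of left/right moves, `false` = left) of the selected node. -/
def botPos : LTree → List Bool
  | leaf _ => []
  | node (leaf _) (leaf _) => []
  | node l r => if goLeft l r then false :: botPos l else true :: botPos r

/-- Cut at the selected node: the two sibling leaves above it are removed, the
node becomes a leaf carrying the smaller label; returns the cut tree together
with the erased (BoT) label, i.e. the larger of the two. -/
def botCut : LTree → LTree × ℕ
  | leaf a => (leaf a, 0)
  | node (leaf a) (leaf b) => (leaf (min a b), max a b)
  | node l r =>
    if goLeft l r then (node (botCut l).1 r, (botCut l).2)
    else (node l (botCut r).1, (botCut r).2)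

/-- Relabel increasingly after erasing label `j`. -/
def relabel (j : ℕ) : LTree → LTree
  | leaf a => leaf (if a < j then a else a - 1)
  | node l r => node (relabel j l) (relabel j r)

/-- The label of the Best-of-Three leaf. -/
def botLabel (t : LTree) : ℕ := (botCut t).2

/-- Best-of-three erasure, including the increasing relabeling. -/
def botErase (t : LTree) : LTree := relabel (botCut t).2 (botCut t).1

/-- Positions (in the original coordinates of `t`) of the branching nodes cut by
`k` successive best-of-three erasures, in order of erasure. -/
def eraseList : ℕ → LTree → List (List Bool)
  | 0, _ => []
  | k + 1, t => botPos t :: eraseList k (botErase t)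

/-- The fringe subtree at a position (`false` = left child, `true` = right child). -/
def subAt : LTree → List Bool → Option LTree
  | t, [] => some t
  | leaf _, _ :: _ => none
  | node l _, false :: p => subAt l p
  | node _ r, true :: p => subAt r p

/-- Shift labels `≥ j` up by one, freeing the label `j`. -/
def relabelUp (j : ℕ) : LTree → LTree
  | leaf a => leaf (if a < j then a else a + 1)
  | node l r => node (relabelUp j l) (relabelUp j r)

/-- Graft a new leaf labeled `j` to the left (`side = false`) or right
(`side = true`) of the leaf labeled `w`. -/
def graft (w j : ℕ) (side : Bool) : LTree → LTree
  | leaf a =>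
    if a = w then (if side then node (leaf a) (leaf j) else node (leaf j) (leaf a))
    else leaf a
  | node l r => node (graft w j side l) (graft w j side r)

/-- The binary tree obtained from the `ℓ`-span (the unary–binary subtree spanned by
the root and the leaves labeled `1,…,ℓ`) by contracting its degree-2 vertices. -/
def trim (ℓ : ℕ) : LTree → LTree
  | leaf a => leaf a
  | node l r =>
    if (labs l).all (fun x => decide (ℓ < x)) then trim ℓ r
    else if (labs r).all (fun x => decide (ℓ < x)) then trim ℓ l
    else node (trim ℓ l) (trim ℓ r)

/-- Map a position in `trim ℓ t` back to the corresponding position in `t`. -/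
def trimPos (ℓ : ℕ) : LTree → List Bool → List Bool
  | leaf _, p => p
  | node l r, p =>
    if (labs l).all (fun x => decide (ℓ < x)) then true :: trimPos ℓ r p
    else if (labs r).all (fun x => decide (ℓ < x)) then false :: trimPos ℓ l p
    else
      match p with
      | [] => []
      | true :: q => true :: trimPos ℓ r q
      | false :: q => false :: trimPos ℓ l q

/-- Subtree relation. -/
inductive Sub : LTree → LTree → Prop
  | refl (t) : Sub t t
  | left {s l r} : Sub s l → Sub s (node l r)
  | right {s l r} : Sub s r → Sub s (node l r)

lemma labs_ne_nil : ∀ t : LTree, labs t ≠ []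
  | leaf a => by simp [labs]
  | node l r => by simp [labs, labs_ne_nil l]

lemma sub_botSel : ∀ t : LTree, Sub (botSel t) t := by
  intro t
  induction t with
  | leaf a => exact Sub.refl _
  | node l r ihl ihr =>
    cases l with
    | leaf a =>
      cases r with
      | leaf b => exact Sub.refl _
      | node r1 r2 =>
        rw [show botSel (node (leaf a) (node r1 r2)) =
          (if goLeft (leaf a) (node r1 r2) then botSel (leaf a) else botSel (node r1 r2)) from rfl]
        split
        · exact Sub.left (Sub.refl _)
        · exact Sub.right ihr
    | node l1 l2 =>
      rw [show botSel (node (node l1 l2) r) =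
        (if goLeft (node l1 l2) r then botSel (node l1 l2) else botSel r) from rfl]
      split
      · exact Sub.left ihl
      · exact Sub.right ihr


lemma two_le_countP {L : List ℕ} {p : ℕ → Bool} {a b : ℕ} (ha : a ∈ L) (hb : b ∈ L)
    (hab : a ≠ b) (hpa : p a) (hpb : p b) : 2 ≤ L.countP p := by
  have ha' : a ∈ L.filter p := List.mem_filter.2 ⟨ha, hpa⟩
  have hb' : b ∈ L.filter p := List.mem_filter.2 ⟨hb, hpb⟩
  rw [List.countP_eq_length_filter]
  calc 2 = ({a, b} : Finset ℕ).card := (Finset.card_pair hab).symm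
    _ ≤ (L.filter p).toFinset.card := Finset.card_le_card (by
        intro x hx
        simp only [Finset.mem_insert, Finset.mem_singleton] at hx
        rcases hx with rfl | rfl <;> simp [List.mem_toFinset, List.mem_filter] <;> exact ⟨‹_›, ‹_›⟩)
    _ ≤ (L.filter p).length := List.toFinset_card_le _

lemma three_le_countP {L : List ℕ} {p : ℕ → Bool} {a b c : ℕ} (ha : a ∈ L) (hb : b ∈ L)
    (hc : c ∈ L) (hab : a ≠ b) (hac : a ≠ c) (hbc : b ≠ c)
    (hpa : p a) (hpb : p b) (hpc : p c) : 3 ≤ L.countP p := by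
  have ha' : a ∈ L.filter p := List.mem_filter.2 ⟨ha, hpa⟩
  have hb' : b ∈ L.filter p := List.mem_filter.2 ⟨hb, hpb⟩
  have hc' : c ∈ L.filter p := List.mem_filter.2 ⟨hc, hpc⟩
  rw [List.countP_eq_length_filter]
  calc 3 = ({a, b, c} : Finset ℕ).card := by
        rw [Finset.card_insert_of_notMem (by simp [hab, hac]), Finset.card_pair hbc]
    _ ≤ (L.filter p).toFinset.card := Finset.card_le_card (by
        intro x hx
        simp only [Finset.mem_insert, Finset.mem_singleton] at hx
        rcases hx with rfl | rfl | rfl <;> simp [List.mem_toFinset, List.mem_filter] <;>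
          exact ⟨‹_›, ‹_›⟩)
    _ ≤ (L.filter p).length := List.toFinset_card_le _

lemma countP_le_one {L : List ℕ} {p : ℕ → Bool} (hnd : L.Nodup)
    (h : ∀ x ∈ L, ∀ y ∈ L, p x → p y → x = y) : L.countP p ≤ 1 := by
  rw [List.countP_eq_length_filter]
  rcases hf : L.filter p with _ | ⟨x, _ | ⟨y, rest⟩⟩
  · simp
  · simp
  · exfalso
    have hx : x ∈ L.filter p := by rw [hf]; simp
    have hy : y ∈ L.filter p := by rw [hf]; simp
    have hndf : (L.filter p).Nodup := hnd.filter p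
    have hxy : x ≠ y := by
      rw [hf] at hndf; simp only [List.nodup_cons, List.mem_cons] at hndf; tauto
    exact hxy (h x (List.mem_filter.1 hx).1 y (List.mem_filter.1 hy).1
      (List.mem_filter.1 hx).2 (List.mem_filter.1 hy).2)

lemma lemQ (L : List ℕ) (h : 3 ≤ L.length) :
    3 ≤ L.countP (fun x => decide (rank L x < 3)) := by
  have hperm : (L.insertionSort (· ≤ ·)).Perm L := L.perm_insertionSort _
  have hsort : (L.insertionSort (· ≤ ·)).Pairwise (· ≤ ·) := L.pairwise_insertionSort _
  have hlen : 3 ≤ (L.insertionSort (· ≤ ·)).length := by rw [hperm.length_eq]; exact h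
  rw [← hperm.countP_eq]
  set M := L.insertionSort (· ≤ ·) with hM
  have hrank : ∀ x, rank L x = rank M x := fun x => (hperm.countP_eq _).symm
  rcases M with _ | ⟨c0, _ | ⟨c1, _ | ⟨c2, rest⟩⟩⟩ <;> simp at hlen
  rw [List.pairwise_cons] at hsort
  obtain ⟨h0, hsort⟩ := hsort
  rw [List.pairwise_cons] at hsort
  obtain ⟨h1, hsort⟩ := hsort
  rw [List.pairwise_cons] at hsort
  obtain ⟨h2, hsort⟩ := hsort
  have hr0 : rank L c0 = 0 := by
    rw [hrank]
    apply List.countP_eq_zero.2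
    intro y hy
    simp only [List.mem_cons] at hy
    simp only [decide_eq_true_eq, not_lt]
    rcases hy with rfl | rfl | rfl | hy
    · exact le_refl _
    · exact h0 _ (by simp)
    · exact h0 _ (by simp)
    · exact h0 _ (by simp [hy])
  have hz1 : List.countP (fun y => decide (y < c1)) (c1 :: c2 :: rest) = 0 := by
    apply List.countP_eq_zero.2
    intro y hy
    simp only [List.mem_cons] at hy
    simp only [decide_eq_true_eq, not_lt]
    rcases hy with rfl | rfl | hy
    · exact le_refl _
    · exact h1 _ (by simp)
    · exact h1 _ (by simp [hy])
  have hz2 : List.countP (fun y => decide (y < c2)) (c2 :: rest) = 0 := by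
    apply List.countP_eq_zero.2
    intro y hy
    simp only [List.mem_cons] at hy
    simp only [decide_eq_true_eq, not_lt]
    rcases hy with rfl | hy
    · exact le_refl _
    · exact h2 _ hy
  have hr1 : rank L c1 ≤ 1 := by
    rw [hrank]
    show List.countP _ (c0 :: c1 :: c2 :: rest) ≤ 1
    rw [List.countP_cons, hz1]
    split <;> omega
  have hr2 : rank L c2 ≤ 2 := by
    rw [hrank]
    show List.countP _ (c0 :: c1 :: c2 :: rest) ≤ 2
    rw [List.countP_cons, List.countP_cons, hz2]
    split <;> split <;> omega
  rw [List.countP_cons, List.countP_cons, List.countP_cons]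
  have p0 : decide (rank L c0 < 3) = true := by simp [hr0]
  have p1 : decide (rank L c1 < 3) = true := by simp; omega
  have p2 : decide (rank L c2 < 3) = true := by simp; omega
  rw [p0, p1, p2]
  simp

lemma goLeft_leaf_left (a : ℕ) (r : LTree) : goLeft (leaf a) r = false := by
  simp only [goLeft, decide_eq_false_iff_not, not_le]
  calc List.countP _ (labs (leaf a)) ≤ (labs (leaf a)).length := List.countP_le_length
    _ = 1 := by simp [labs]
    _ < 2 := by omega

lemma goLeft_node_leaf (l1 l2 : LTree) (b : ℕ) : goLeft (node l1 l2) (leaf b) = true := by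
  simp only [goLeft, decide_eq_true_eq]
  have hlen : 3 ≤ (labs (node l1 l2) ++ labs (leaf b)).length := by
    have h1 := labs_ne_nil l1
    have h2 := labs_ne_nil l2
    rw [← List.length_pos_iff] at h1 h2
    simp [labs]
    omega
  have hQ := lemQ (labs (node l1 l2) ++ labs (leaf b)) hlen
  rw [List.countP_append] at hQ
  have : List.countP (fun x => decide (rank (labs (node l1 l2) ++ labs (leaf b)) x < 3))
      (labs (leaf b)) ≤ 1 := by
    calc List.countP _ _ ≤ (labs (leaf b)).length := List.countP_le_length
      _ = 1 := by simp [labs]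
  omega

lemma lemS : ∀ t : LTree, (∀ x, t ≠ leaf x) → ∃ a b L R,
    botSel t = node (leaf a) (leaf b) ∧ (botCut t).2 = max a b ∧
    labs t = L ++ a :: b :: R ∧ labs (botCut t).1 = L ++ min a b :: R := by
  intro t
  induction t with
  | leaf a => intro h; exact absurd rfl (h a)
  | node l r ihl ihr =>
    intro _
    cases l with
    | leaf a =>
      cases r with
      | leaf b =>
        exact ⟨a, b, [], [], rfl, rfl, rfl, rfl⟩
      | node r1 r2 =>
        have hgo := goLeft_leaf_left a (node r1 r2)
        obtain ⟨a', b', L, R, h1, h2, h3, h4⟩ := ihr (by simp)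
        refine ⟨a', b', a :: L, R, ?_, ?_, ?_, ?_⟩
        · rw [show botSel (node (leaf a) (node r1 r2)) =
            (if goLeft (leaf a) (node r1 r2) then botSel (leaf a) else botSel (node r1 r2))
            from rfl, hgo]
          simpa using h1
        · rw [show botCut (node (leaf a) (node r1 r2)) =
            (if goLeft (leaf a) (node r1 r2)
              then (node (botCut (leaf a)).1 (node r1 r2), (botCut (leaf a)).2)
              else (node (leaf a) (botCut (node r1 r2)).1, (botCut (node r1 r2)).2)) from rfl,
            hgo]
          simpa using h2
        · simp only [labs] at h3 ⊢; simp [h3]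
        · rw [show botCut (node (leaf a) (node r1 r2)) =
            (if goLeft (leaf a) (node r1 r2)
              then (node (botCut (leaf a)).1 (node r1 r2), (botCut (leaf a)).2)
              else (node (leaf a) (botCut (node r1 r2)).1, (botCut (node r1 r2)).2)) from rfl,
            hgo]
          simp [labs, h4]
    | node l1 l2 =>
      obtain ⟨a', b', L, R, h1, h2, h3, h4⟩ := ihl (by simp)
      have hbse : botSel (node (node l1 l2) r) =
          (if goLeft (node l1 l2) r then botSel (node l1 l2) else botSel r) := by
        cases r <;> rfl
      have hbce : botCut (node (node l1 l2) r) =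
          (if goLeft (node l1 l2) r
            then (node (botCut (node l1 l2)).1 r, (botCut (node l1 l2)).2)
            else (node (node l1 l2) (botCut r).1, (botCut r).2)) := by
        cases r <;> rfl
      cases hgo : goLeft (node l1 l2) r with
      | true =>
        refine ⟨a', b', L, R ++ labs r, ?_, ?_, ?_, ?_⟩
        · rw [hbse, hgo]; simpa using h1
        · rw [hbce, hgo]; simpa using h2
        · simp only [labs] at h3 ⊢; rw [h3]; simp
        · rw [hbce, hgo]; simp [labs, h4]
      | false =>
        cases r with
        | leaf b => rw [goLeft_node_leaf] at hgo; exact absurd hgo (by simp)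
        | node r1 r2 =>
          obtain ⟨a'', b'', L', R', g1, g2, g3, g4⟩ := ihr (by simp)
          refine ⟨a'', b'', labs (node l1 l2) ++ L', R', ?_, ?_, ?_, ?_⟩
          · rw [hbse, hgo]; simpa using g1
          · rw [hbce, hgo]; simpa using g2
          · simp only [labs] at g3 ⊢; simp [g3]
          · rw [hbce, hgo]; simp only [labs] at g4 ⊢; simp [labs, g4]

lemma graft_eq_of_not_mem {w j : ℕ} {side : Bool} :
    ∀ u : LTree, w ∉ labs u → graft w j side u = u := by
  intro u
  induction u with
  | leaf a => intro h; simp [labs] at h; simp [graft, Ne.symm h]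
  | node l r ihl ihr =>
    intro h
    simp only [labs, List.mem_append, not_or] at h
    simp [graft, ihl h.1, ihr h.2]

lemma graft_node_of_mem {w j : ℕ} {side : Bool} :
    ∀ u : LTree, w ∈ labs u → ∃ a b, graft w j side u = node a b := by
  intro u
  cases u with
  | leaf a =>
    intro h; simp [labs] at h; subst h
    cases side <;> simp [graft]
  | node l r => intro _; exact ⟨_, _, rfl⟩

lemma labs_graft_perm (w j : ℕ) (side : Bool) :
    ∀ u : LTree, (labs (graft w j side u)).Perm
      (labs u ++ List.replicate ((labs u).count w) j) := by
  intro u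
  induction u with
  | leaf a =>
    by_cases h : a = w <;> cases side <;>
      simp [graft, labs, h, List.count_cons, List.count_nil] <;>
      first
        | exact List.Perm.refl _
        | exact List.Perm.swap _ _ _
  | node l r ihl ihr =>
    rw [List.perm_iff_count]
    rw [List.perm_iff_count] at ihl ihr
    intro x
    have hl := ihl x
    have hr := ihr x
    simp only [labs, graft, List.count_append, List.count_replicate] at *
    by_cases hx : j = x <;> simp [hx] at * <;> omega

lemma relabelUp_relabel {j : ℕ} : ∀ u : LTree, j ∉ labs u →
    relabelUp j (relabel j u) = u := by
  intro u
  induction u with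
  | leaf a =>
    intro h
    simp only [labs, List.mem_singleton] at h
    simp only [relabel, relabelUp, leaf.injEq]
    split
    · rfl
    · rw [if_neg (by omega)]; omega
  | node l r ihl ihr =>
    intro h
    simp only [labs, List.mem_append, not_or] at h
    simp only [relabel, relabelUp, node.injEq]
    exact ⟨ihl h.1, ihr h.2⟩

lemma eq_leaf_of_graft_eq_leaf {w j c : ℕ} {side : Bool} :
    ∀ u : LTree, graft w j side u = leaf c → c ∈ labs u := by
  intro u
  cases u with
  | leaf a =>
    intro h
    by_cases haw : a = w
    · subst haw; cases side <;> simp [graft] at h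
    · simp only [graft, if_neg haw] at h
      injection h with h'
      simp [labs, h']
  | node l r => intro h; simp [graft] at h

lemma lemA (side : Bool) : ∀ u : LTree, (labs u).Nodup → 1 ∈ labs u →
    (∀ x ∈ labs u, x = 1 ∨ 3 ≤ x) → botCut (graft 1 2 side u) = (u, 2) := by
  intro u
  induction u with
  | leaf a =>
    intro _ h1 _
    simp only [labs, List.mem_singleton] at h1
    subst h1
    cases side <;> simp [graft] <;> rfl
  | node l r ihl ihr =>
    intro hnd h1 hall
    have hnd' : (labs l ++ labs r).Nodup := by simpa [labs] using hnd
    have hndl := (List.nodup_append.1 hnd').1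
    have hndr := (List.nodup_append.1 hnd').2.1
    have hdisj := (List.nodup_append.1 hnd').2.2
    have hall' : ∀ x ∈ labs l ++ labs r, x = 1 ∨ 3 ≤ x := by simpa [labs] using hall
    simp only [labs, List.mem_append] at h1
    rcases h1 with h1 | h1
    · -- 1 in the left subtree
      have h1r : (1:ℕ) ∉ labs r := fun hm => hdisj _ h1 _ hm rfl
      have hgr : graft 1 2 side r = r := graft_eq_of_not_mem r h1r
      obtain ⟨g1, g2, hgl⟩ := graft_node_of_mem (j := 2) (side := side) l h1
      have hcnt : (labs l).count 1 = 1 := List.count_eq_one_of_mem hndl h1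
      have hpl : (labs (graft 1 2 side l)).Perm (labs l ++ [2]) := by
        simpa [hcnt] using labs_graft_perm 1 2 side l
      have h2mem : (2:ℕ) ∈ labs (graft 1 2 side l) := hpl.symm.subset (by simp)
      have h1mem : (1:ℕ) ∈ labs (graft 1 2 side l) := hpl.symm.subset (by simp [h1])
      have hcomb : (labs (graft 1 2 side l) ++ labs r).Perm ((labs l ++ labs r) ++ [2]) := by
        refine (hpl.append_right _).trans ?_
        rw [List.append_assoc, List.append_assoc]
        exact List.Perm.append_left _ List.perm_append_comm
      have hrank1 : rank (labs (graft 1 2 side l) ++ labs r) 1 = 0 := by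
        rw [show rank (labs (graft 1 2 side l) ++ labs r) 1
            = rank ((labs l ++ labs r) ++ [2]) 1 from hcomb.countP_eq _]
        apply List.countP_eq_zero.2
        intro y hy
        simp only [List.mem_append, List.mem_singleton] at hy
        simp only [decide_eq_true_eq, not_lt]
        rcases hy with hy | rfl
        · rcases hall' y (List.mem_append.2 hy) with rfl | h3 <;> omega
        · omega
      have hrank2 : rank (labs (graft 1 2 side l) ++ labs r) 2 ≤ 1 := by
        rw [show rank (labs (graft 1 2 side l) ++ labs r) 2
            = rank ((labs l ++ labs r) ++ [2]) 2 from hcomb.countP_eq _]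
        unfold rank
        rw [List.countP_append]
        have hz : List.countP (fun y => decide (y < 2)) [2] = 0 := by simp
        rw [hz]
        have hle := countP_le_one (p := fun y => decide (y < 2)) hnd' (by
          intro x hx y hy px py
          simp only [decide_eq_true_eq] at px py
          rcases hall' x hx with rfl | h3x
          · rcases hall' y hy with rfl | h3y
            · rfl
            · omega
          · omega)
        omega
      have hgo : goLeft (graft 1 2 side l) r = true := by
        simp only [goLeft, decide_eq_true_eq]
        exact two_le_countP h1mem h2mem (by omega)
          (by simp only [decide_eq_true_eq]; omega)
          (by simp only [decide_eq_true_eq]; omega)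
      have ihl' : botCut (graft 1 2 side l) = (l, 2) :=
        ihl hndl h1 (fun x hx => hall' x (List.mem_append_left _ hx))
      rw [show graft 1 2 side (node l r)
          = node (graft 1 2 side l) (graft 1 2 side r) from rfl, hgr]
      rw [hgl] at hgo ihl' ⊢
      rw [show botCut (node (node g1 g2) r)
          = (if goLeft (node g1 g2) r
              then (node (botCut (node g1 g2)).1 r, (botCut (node g1 g2)).2)
              else (node (node g1 g2) (botCut r).1, (botCut r).2)) from (by cases r <;> rfl)]
      rw [hgo, if_pos rfl] at *
      · simp [ihl']
    · -- 1 in the right subtree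
      have h1l : (1:ℕ) ∉ labs l := fun hm => hdisj _ hm _ h1 rfl
      have hgl : graft 1 2 side l = l := graft_eq_of_not_mem l h1l
      obtain ⟨g1, g2, hgr⟩ := graft_node_of_mem (j := 2) (side := side) r h1
      have hcnt : (labs r).count 1 = 1 := List.count_eq_one_of_mem hndr h1
      have hpr : (labs (graft 1 2 side r)).Perm (labs r ++ [2]) := by
        simpa [hcnt] using labs_graft_perm 1 2 side r
      have h2mem : (2:ℕ) ∈ labs (graft 1 2 side r) := hpr.symm.subset (by simp)
      have h1mem : (1:ℕ) ∈ labs (graft 1 2 side r) := hpr.symm.subset (by simp [h1])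
      have hcomb : (labs l ++ labs (graft 1 2 side r)).Perm ((labs l ++ labs r) ++ [2]) := by
        refine (List.Perm.append_left _ hpr).trans ?_
        rw [List.append_assoc]
      have hgo : goLeft l (graft 1 2 side r) = false := by
        simp only [goLeft, decide_eq_false_iff_not, not_le]
        have hle : (labs l).countP
            (fun x => decide (rank (labs l ++ labs (graft 1 2 side r)) x < 3)) ≤ 1 := by
          apply countP_le_one hndl
          intro x hx y hy px py
          simp only [decide_eq_true_eq] at px py
          by_contra hxy
          have hx3 : 3 ≤ x := by
            rcases hall' x (List.mem_append_left _ hx) with rfl | h3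
            · exact absurd hx h1l
            · exact h3
          have hy3 : 3 ≤ y := by
            rcases hall' y (List.mem_append_left _ hy) with rfl | h3
            · exact absurd hy h1l
            · exact h3
          rcases Nat.lt_trichotomy x y with hlt | hEq | hlt
          · have h3le : 3 ≤ rank (labs l ++ labs (graft 1 2 side r)) y := by
              apply three_le_countP (a := 1) (b := 2) (c := x)
                (List.mem_append_right _ h1mem) (List.mem_append_right _ h2mem)
                (List.mem_append_left _ hx) (by omega) (by omega) (by omega)
                <;> simp only [decide_eq_true_eq] <;> omega
            omega
          · exact hxy hEq
          · have h3le : 3 ≤ rank (labs l ++ labs (graft 1 2 side r)) x := by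
              apply three_le_countP (a := 1) (b := 2) (c := y)
                (List.mem_append_right _ h1mem) (List.mem_append_right _ h2mem)
                (List.mem_append_left _ hy) (by omega) (by omega) (by omega)
                <;> simp only [decide_eq_true_eq] <;> omega
            omega
        omega
      have ihr' : botCut (graft 1 2 side r) = (r, 2) :=
        ihr hndr h1 (fun x hx => hall' x (List.mem_append_right _ hx))
      rw [show graft 1 2 side (node l r)
          = node (graft 1 2 side l) (graft 1 2 side r) from rfl, hgl]
      rw [hgr] at hgo ihr' ⊢
      rw [show botCut (node l (node g1 g2))
          = (if goLeft l (node g1 g2)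
              then (node (botCut l).1 (node g1 g2), (botCut l).2)
              else (node l (botCut (node g1 g2)).1, (botCut (node g1 g2)).2))
            from (by cases l <;> rfl)]
      rw [hgo]
      simp [ihr']

lemma lemB {c d w : ℕ} {side : Bool} : ∀ u : LTree, 2 ∉ labs u →
    Sub (node (leaf c) (leaf d)) (graft w 2 side u) → (c = 2 ∨ d = 2) →
    (c = 2 ∨ c = w) ∧ (d = 2 ∨ d = w) := by
  intro u
  induction u with
  | leaf a =>
    intro h2 hsub hcd
    by_cases haw : a = w
    · subst haw
      cases side <;> simp only [graft, if_pos rfl, if_true, if_false, Bool.false_eq_true] at hsub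
      · cases hsub with
        | refl => exact ⟨Or.inl rfl, Or.inr rfl⟩
        | left h => cases h
        | right h => cases h
      · cases hsub with
        | refl => exact ⟨Or.inr rfl, Or.inl rfl⟩
        | left h => cases h
        | right h => cases h
    · simp only [graft, if_neg haw] at hsub
      cases hsub
  | node l r ihl ihr =>
    intro h2 hsub hcd
    simp only [labs, List.mem_append, not_or] at h2
    rw [show graft w 2 side (node l r)
        = node (graft w 2 side l) (graft w 2 side r) from rfl] at hsub
    generalize hL : graft w 2 side l = gl at hsub
    generalize hR : graft w 2 side r = gr at hsub
    cases hsub with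
    | refl =>
      exfalso
      have hc : c ∈ labs l := eq_leaf_of_graft_eq_leaf l hL
      have hd : d ∈ labs r := eq_leaf_of_graft_eq_leaf r hR
      rcases hcd with rfl | rfl
      · exact h2.1 hc
      · exact h2.2 hd
    | left h => exact ihl h2.1 (hL ▸ h) hcd
    | right h => exact ihr h2.2 (hR ▸ h) hcd

end LTree

/-- If the BoT leaf of a labeled binary tree of size `n` has label
`2`, then it is the sibling of the leaf labeled `1`, and there are exactly `2`
ways to reconstruct a preimage of the erasure with BoT label `2`: grafting the
leaf labeled `2` to the left or to the right of the leaf labeled `1`. -/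
theorem two_grafting_positions_label_two (n : ℕ) (t : LTree) (hn : 2 ≤ n)
    (h : LTree.IsLab n t) (h2 : LTree.botLabel t = 2) :
    (LTree.botSel t = LTree.node (LTree.leaf 1) (LTree.leaf 2) ∨
      LTree.botSel t = LTree.node (LTree.leaf 2) (LTree.leaf 1)) ∧
    {p : ℕ × Bool |
        p.1 ∈ LTree.labs (LTree.relabelUp 2 (LTree.botErase t)) ∧
        LTree.botErase (LTree.graft p.1 2 p.2 (LTree.relabelUp 2 (LTree.botErase t))) =
          LTree.botErase t ∧
        LTree.botLabel (LTree.graft p.1 2 p.2 (LTree.relabelUp 2 (LTree.botErase t))) = 2} =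
      {(1, false), (1, true)} := by
  classical
  obtain ⟨hsize, hperm⟩ := h
  have htn : ∀ x, t ≠ LTree.leaf x := by
    intro x hx
    rw [hx] at h2
    simp [LTree.botLabel, LTree.botCut] at h2
  obtain ⟨a, b, L, R, hsel, hmax, hlabs, hcut⟩ := LTree.lemS t htn
  have hnd : (LTree.labs t).Nodup := hperm.nodup_iff.2 (by
    apply List.Nodup.map ?_ List.nodup_range
    intro x y hxy
    simpa using hxy)
  have hmem1 : ∀ x ∈ LTree.labs t, 1 ≤ x := by
    intro x hx
    have hx' := hperm.subset hx
    simp only [List.mem_map, List.mem_range] at hx'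
    obtain ⟨k, _, rfl⟩ := hx'
    omega
  have hnd' : (L ++ a :: b :: R).Nodup := hlabs ▸ hnd
  have hpieces := List.nodup_append.1 hnd'
  have hLnd : L.Nodup := hpieces.1
  have hdisj : L.Disjoint (a :: b :: R) :=
    fun x hx hy => hpieces.2.2 x hx x hy rfl
  have habR : a ∉ b :: R := (List.nodup_cons.1 hpieces.2.1).1
  have hbR : b ∉ R := (List.nodup_cons.1 (List.nodup_cons.1 hpieces.2.1).2).1
  have hRnd : R.Nodup := (List.nodup_cons.1 (List.nodup_cons.1 hpieces.2.1).2).2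
  have hab : a ≠ b := fun hEq => habR (hEq ▸ List.mem_cons_self)
  have ha1 : 1 ≤ a := hmem1 a (by rw [hlabs]; simp)
  have hb1 : 1 ≤ b := hmem1 b (by rw [hlabs]; simp)
  have hmaxab : max a b = 2 := by rw [← hmax]; exact h2
  have hcase : (a = 1 ∧ b = 2) ∨ (a = 2 ∧ b = 1) := by omega
  have hmin : min a b = 1 := by omega
  constructor
  · rcases hcase with ⟨rfl, rfl⟩ | ⟨rfl, rfl⟩
    · exact Or.inl hsel
    · exact Or.inr hsel
  -- part 2
  have hslabs : LTree.labs (LTree.botCut t).1 = L ++ 1 :: R := by rw [hcut, hmin]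
  have h2L : (2:ℕ) ∉ L := by
    intro hL
    rcases hcase with ⟨rfl, rfl⟩ | ⟨rfl, rfl⟩
    · exact hdisj hL (by simp)
    · exact hdisj hL (by simp)
  have h2R : (2:ℕ) ∉ R := by
    intro hR
    rcases hcase with ⟨rfl, rfl⟩ | ⟨rfl, rfl⟩
    · exact hbR hR
    · exact habR (by simp [hR])
  have hs2 : (2:ℕ) ∉ LTree.labs (LTree.botCut t).1 := by
    rw [hslabs]
    simp only [List.mem_append, List.mem_cons]
    rintro (hL | hEq | hR)
    · exact h2L hL
    · omega
    · exact h2R hR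
  have h1R : (1:ℕ) ∉ R := by
    rcases hcase with ⟨rfl, rfl⟩ | ⟨rfl, rfl⟩
    · intro hR; exact habR (by simp [hR])
    · exact hbR
  have h1L : (1:ℕ) ∉ L := by
    rcases hcase with ⟨rfl, rfl⟩ | ⟨rfl, rfl⟩
    · intro hL; exact hdisj hL (by simp)
    · intro hL; exact hdisj hL (by simp)
  have hsnd : (LTree.labs (LTree.botCut t).1).Nodup := by
    rw [hslabs, List.nodup_append]
    refine ⟨hLnd, List.nodup_cons.2 ⟨h1R, hRnd⟩, ?_⟩
    intro x hxL y hx1R hxy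
    subst hxy
    rcases List.mem_cons.1 hx1R with rfl | hxR
    · exact h1L hxL
    · exact hdisj hxL (by simp [hxR])
  have hsall : ∀ x ∈ LTree.labs (LTree.botCut t).1, x = 1 ∨ 3 ≤ x := by
    rw [hslabs]
    intro x hx
    rcases List.mem_append.1 hx with hxL | hx1R
    · have hxt : x ∈ LTree.labs t := by rw [hlabs]; simp [hxL]
      have := hmem1 x hxt
      have hx2 : x ≠ 2 := fun hEq => h2L (hEq ▸ hxL)
      omega
    · rcases List.mem_cons.1 hx1R with rfl | hxR
      · omega
      · have hxt : x ∈ LTree.labs t := by rw [hlabs]; simp [hxR]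
        have := hmem1 x hxt
        have hx2 : x ≠ 2 := fun hEq => h2R (hEq ▸ hxR)
        omega
  have hcut2 : (LTree.botCut t).2 = 2 := by rw [hmax]; omega
  have hbe : LTree.botErase t = LTree.relabel 2 (LTree.botCut t).1 := by
    rw [LTree.botErase, hcut2]
  have hsup : LTree.relabelUp 2 (LTree.botErase t) = (LTree.botCut t).1 := by
    rw [hbe]
    exact LTree.relabelUp_relabel _ hs2
  have h1s : (1:ℕ) ∈ LTree.labs (LTree.botCut t).1 := by rw [hslabs]; simp
  ext ⟨w, side⟩
  simp only [Set.mem_setOf_eq, Set.mem_insert_iff, Set.mem_singleton_iff, Prod.mk.injEq]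
  rw [hsup]
  constructor
  · rintro ⟨hw, herase, hlab⟩
    suffices hw1 : w = 1 by
      cases side
      · exact Or.inl ⟨hw1, rfl⟩
      · exact Or.inr ⟨hw1, rfl⟩
    obtain ⟨g1, g2, hg⟩ := LTree.graft_node_of_mem (j := 2) (side := side) _ hw
    have hgn : ∀ x, LTree.graft w 2 side (LTree.botCut t).1 ≠ LTree.leaf x := by
      rw [hg]; simp
    obtain ⟨c, d, L', R', gsel, gmax, glabs, _⟩ := LTree.lemS _ hgn
    have hcnt : (LTree.labs (LTree.botCut t).1).count w = 1 :=
      List.count_eq_one_of_mem hsnd hw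
    have hgperm : (LTree.labs (LTree.graft w 2 side (LTree.botCut t).1)).Perm
        (LTree.labs (LTree.botCut t).1 ++ [2]) := by
      simpa [hcnt] using LTree.labs_graft_perm w 2 side (LTree.botCut t).1
    have hgnd : (LTree.labs (LTree.graft w 2 side (LTree.botCut t).1)).Nodup := by
      rw [hgperm.nodup_iff]
      rw [List.nodup_append]
      refine ⟨hsnd, by simp, ?_⟩
      intro x hx y hx2 hxy
      simp only [List.mem_singleton] at hx2
      subst hx2
      exact hs2 (hxy ▸ hx)
    have hgnd' : (L' ++ c :: d :: R').Nodup := glabs ▸ hgnd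
    have hcd : c ≠ d := by
      have := (List.nodup_cons.1 (List.nodup_append.1 hgnd').2.1).1
      exact fun hEq => this (hEq ▸ List.mem_cons_self)
    have hc1 : 1 ≤ c := by
      have hcm : c ∈ LTree.labs (LTree.graft w 2 side (LTree.botCut t).1) := by
        rw [glabs]; simp
      rcases List.mem_append.1 (hgperm.subset hcm) with hcs | hc2
      · rcases hsall c hcs with rfl | h3 <;> omega
      · simp only [List.mem_singleton] at hc2; omega
    have hd1 : 1 ≤ d := by
      have hdm : d ∈ LTree.labs (LTree.graft w 2 side (LTree.botCut t).1) := by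
        rw [glabs]; simp
      rcases List.mem_append.1 (hgperm.subset hdm) with hds | hd2
      · rcases hsall d hds with rfl | h3 <;> omega
      · simp only [List.mem_singleton] at hd2; omega
    have hmaxcd : max c d = 2 := by rw [← gmax]; exact hlab
    have hcase2 : (c = 1 ∧ d = 2) ∨ (c = 2 ∧ d = 1) := by omega
    have hsubg : LTree.Sub (LTree.node (LTree.leaf c) (LTree.leaf d))
        (LTree.graft w 2 side (LTree.botCut t).1) := gsel ▸ LTree.sub_botSel _
    have hB := LTree.lemB _ hs2 hsubg (by omega)
    rcases hcase2 with ⟨rfl, rfl⟩ | ⟨rfl, rfl⟩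
    · rcases hB.1 with hc | hc <;> omega
    · rcases hB.2 with hd | hd <;> omega
  · intro hw
    have hws : w = 1 ∧ (side = false ∨ side = true) := by
      rcases hw with ⟨rfl, rfl⟩ | ⟨rfl, rfl⟩ <;> simp
    obtain ⟨rfl, -⟩ := hws
    have hA := LTree.lemA side (LTree.botCut t).1 hsnd h1s hsall
    refine ⟨h1s, ?_, ?_⟩
    · rw [LTree.botErase, hA, hbe]
    · rw [LTree.botLabel, hA]
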